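/- Let G be a locally compact Hausdorff topological group with a left Haar measure μ, ω a weight on G, and ν the measure with density ω with respect to μ (ν = ω dμ). Let X be a pre-ordered Banach space whose closed cone X₊ is generating in X. Then the cone of ν-a.e. X₊-valued integrable functions is generating in the Bochner space L¹(ν, X): there exists a constant α > 0 such that for every Bochner ν-integrable f : G → X there exist Bochner ν-integrable f⁺, f⁻ : G → X with f⁺(s) ∈ X₊ and f⁻(s) ∈ X₊ for all s ∈ G, f(s) = f⁺(s) − f⁻(s) for all s ∈ G, and ∫‖f⁺‖ dν ≤ α ∫‖f‖ dν and ∫‖f⁻‖ dν ≤ α ∫‖f‖ dν. -/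

import Mathlib

open MeasureTheory Filter Topology
open scoped ENNReal NNReal

set_option linter.unusedSectionVars false
set_option linter.unusedVariables false
set_option maxHeartbeats 1000000

section ConeDecomp

variable {X : Type*} [NormedAddCommGroup X] [NormedSpace ℝ X]

theorem cone_zero_mem (Xpos : Set X)
    (hXpos_smul : ∀ (t : ℝ), 0 ≤ t → ∀ x ∈ Xpos, t • x ∈ Xpos)
    (hXgen : ∀ x : X, ∃ a ∈ Xpos, ∃ b ∈ Xpos, x = a - b) : (0 : X) ∈ Xpos := by
  obtain ⟨a, ha, -⟩ := hXgen 0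
  simpa using hXpos_smul 0 le_rfl a ha

-- approximate decomposition with linear norm control
theorem cone_approx_decomp [CompleteSpace X] (Xpos : Set X) (hXpos_closed : IsClosed Xpos)
    (hXpos_add : ∀ x ∈ Xpos, ∀ y ∈ Xpos, x + y ∈ Xpos)
    (hXpos_smul : ∀ (t : ℝ), 0 ≤ t → ∀ x ∈ Xpos, t • x ∈ Xpos)
    (hXgen : ∀ x : X, ∃ a ∈ Xpos, ∃ b ∈ Xpos, x = a - b) :
    ∃ c : ℝ, 0 < c ∧ ∀ z : X, ∀ ε : ℝ, 0 < ε →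
      ∃ a ∈ Xpos, ∃ b ∈ Xpos, ‖a‖ ≤ c * ‖z‖ ∧ ‖b‖ ≤ c * ‖z‖ ∧ ‖z - (a - b)‖ < ε := by
  have h0 : (0:X) ∈ Xpos := cone_zero_mem Xpos hXpos_smul hXgen
  set D : ℕ → Set X := fun n =>
    {x | ∃ a ∈ Xpos, ∃ b ∈ Xpos, x = a - b ∧ ‖a‖ ≤ n ∧ ‖b‖ ≤ n} with hD
  have hU : (⋃ n, closure (D n)) = Set.univ := by
    refine Set.eq_univ_of_forall fun x => ?_
    obtain ⟨a, ha, b, hb, hx⟩ := hXgen x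
    obtain ⟨n, hn⟩ := exists_nat_ge (max ‖a‖ ‖b‖)
    exact Set.mem_iUnion.2 ⟨n, subset_closure
      ⟨a, ha, b, hb, hx, (le_max_left _ _).trans hn, (le_max_right _ _).trans hn⟩⟩
  obtain ⟨n, y, hy⟩ := nonempty_interior_of_iUnion_of_closed
    (fun n => isClosed_closure (s := D n)) hU
  obtain ⟨r, hr, hball⟩ := Metric.mem_nhds_iff.mp (mem_interior_iff_mem_nhds.mp hy)
  -- every z in ball 0 r is approximable by elements of D with both norms ≤ 2n
  have key : ∀ z : X, ‖z‖ < r → ∀ ε : ℝ, 0 < ε →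
      ∃ a ∈ Xpos, ∃ b ∈ Xpos, ‖a‖ ≤ 2*n ∧ ‖b‖ ≤ 2*n ∧ ‖z - (a - b)‖ < ε := by
    intro z hz ε hε
    have hyz : y + z ∈ closure (D n) := hball (by simpa [Metric.mem_ball, dist_eq_norm] using hz)
    have hyy : y ∈ closure (D n) := hball (Metric.mem_ball_self hr)
    obtain ⟨d₁, hd₁, hdist₁⟩ := Metric.mem_closure_iff.mp hyz (ε/2) (by positivity)
    obtain ⟨d₂, hd₂, hdist₂⟩ := Metric.mem_closure_iff.mp hyy (ε/2) (by positivity)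
    obtain ⟨a₁, ha₁, b₁, hb₁, he₁, hna₁, hnb₁⟩ := hd₁
    obtain ⟨a₂, ha₂, b₂, hb₂, he₂, hna₂, hnb₂⟩ := hd₂
    refine ⟨a₁ + b₂, hXpos_add _ ha₁ _ hb₂, b₁ + a₂, hXpos_add _ hb₁ _ ha₂, ?_, ?_, ?_⟩
    · calc ‖a₁ + b₂‖ ≤ ‖a₁‖ + ‖b₂‖ := norm_add_le _ _
        _ ≤ 2*n := by linarith
    · calc ‖b₁ + a₂‖ ≤ ‖b₁‖ + ‖a₂‖ := norm_add_le _ _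
        _ ≤ 2*n := by linarith
    · have : z - ((a₁ + b₂) - (b₁ + a₂)) = ((y + z) - d₁) - (y - d₂) := by
        rw [he₁, he₂]; abel
      rw [this]
      calc ‖((y + z) - d₁) - (y - d₂)‖ ≤ ‖(y+z) - d₁‖ + ‖y - d₂‖ := norm_sub_le _ _
        _ < ε/2 + ε/2 := by
            rw [dist_eq_norm] at hdist₁ hdist₂
            exact add_lt_add hdist₁ hdist₂
        _ = ε := by ring
  refine ⟨(4*n+4)/r, by positivity, fun z ε hε => ?_⟩
  by_cases hz0 : z = 0
  · exact ⟨0, h0, 0, h0, by simp [hz0], by simp [hz0],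
      by simpa [hz0] using hε⟩
  have hnz : (0:ℝ) < ‖z‖ := norm_pos_iff.mpr hz0
  set lam : ℝ := 2 * ‖z‖ / r with hlam
  have hlampos : 0 < lam := by positivity
  have hw : ‖lam⁻¹ • z‖ < r := by
    rw [norm_smul, Real.norm_eq_abs, abs_inv, abs_of_pos hlampos, hlam]
    rw [inv_mul_lt_iff₀ (by positivity)]
    rw [div_mul_eq_mul_div, lt_div_iff₀ hr] at *
    nlinarith
  obtain ⟨a', ha', b', hb', hna', hnb', happ⟩ := key _ hw (lam⁻¹ * ε)
    (by positivity)
  refine ⟨lam • a', hXpos_smul _ hlampos.le _ ha', lam • b', hXpos_smul _ hlampos.le _ hb',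
    ?_, ?_, ?_⟩
  · rw [norm_smul, Real.norm_eq_abs, abs_of_pos hlampos]
    calc lam * ‖a'‖ ≤ lam * (2*n) := by nlinarith
      _ ≤ (4*n+4)/r * ‖z‖ := by
          rw [hlam]; rw [div_mul_eq_mul_div, div_mul_eq_mul_div, div_le_div_iff_of_pos_right hr]
          nlinarith
  · rw [norm_smul, Real.norm_eq_abs, abs_of_pos hlampos]
    calc lam * ‖b'‖ ≤ lam * (2*n) := by nlinarith
      _ ≤ (4*n+4)/r * ‖z‖ := by
          rw [hlam]; rw [div_mul_eq_mul_div, div_mul_eq_mul_div, div_le_div_iff_of_pos_right hr]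
          nlinarith
  · have : z - (lam • a' - lam • b') = lam • (lam⁻¹ • z - (a' - b')) := by
      rw [smul_sub, smul_sub, smul_inv_smul₀ hlampos.ne']
    rw [this, norm_smul, Real.norm_eq_abs, abs_of_pos hlampos]
    calc lam * ‖lam⁻¹ • z - (a' - b')‖ < lam * (lam⁻¹ * ε) := by
          exact mul_lt_mul_of_pos_left happ hlampos
      _ = ε := by field_simp

end ConeDecomp


section Decomp
variable {X : Type*} [NormedAddCommGroup X] [NormedSpace ℝ X] [CompleteSpace X]

theorem cone_sum_mem (Xpos : Set X)
    (hXpos_add : ∀ x ∈ Xpos, ∀ y ∈ Xpos, x + y ∈ Xpos) (h0 : (0:X) ∈ Xpos)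
    {ι : Type*} (g : ι → X) (s : Finset ι) (hg : ∀ i, g i ∈ Xpos) :
    ∑ i ∈ s, g i ∈ Xpos := by
  classical
  induction s using Finset.induction with
  | empty => simpa
  | insert a s h ih => rw [Finset.sum_insert h]; exact hXpos_add _ (hg _) _ ih

theorem cone_tsum_mem (Xpos : Set X) (hclosed : IsClosed Xpos)
    (hXpos_add : ∀ x ∈ Xpos, ∀ y ∈ Xpos, x + y ∈ Xpos) (h0 : (0:X) ∈ Xpos)
    (g : ℕ → X) (hs : Summable g) (hg : ∀ i, g i ∈ Xpos) : ∑' i, g i ∈ Xpos :=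
  hclosed.mem_of_tendsto hs.hasSum.tendsto_sum_nat
    (Eventually.of_forall fun n => cone_sum_mem Xpos hXpos_add h0 g _ hg)

theorem cone_decomp (Xpos : Set X) (hXpos_closed : IsClosed Xpos)
    (hXpos_add : ∀ x ∈ Xpos, ∀ y ∈ Xpos, x + y ∈ Xpos)
    (hXpos_smul : ∀ (t : ℝ), 0 ≤ t → ∀ x ∈ Xpos, t • x ∈ Xpos)
    (hXgen : ∀ x : X, ∃ a ∈ Xpos, ∃ b ∈ Xpos, x = a - b)
    (happrox : ∃ c : ℝ, 0 < c ∧ ∀ z : X, ∀ ε : ℝ, 0 < ε →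
      ∃ a ∈ Xpos, ∃ b ∈ Xpos, ‖a‖ ≤ c * ‖z‖ ∧ ‖b‖ ≤ c * ‖z‖ ∧ ‖z - (a - b)‖ < ε)
    (h0 : (0:X) ∈ Xpos) :
    ∃ C : ℝ, 0 < C ∧ ∀ x : X,
      ∃ a ∈ Xpos, ∃ b ∈ Xpos, x = a - b ∧ ‖a‖ ≤ C * ‖x‖ ∧ ‖b‖ ≤ C * ‖x‖ := by
  obtain ⟨c, hc, happ⟩ := happrox
  -- one-step maps A B
  have hstep : ∀ v : X, ∃ a ∈ Xpos, ∃ b ∈ Xpos,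
      ‖a‖ ≤ c * ‖v‖ ∧ ‖b‖ ≤ c * ‖v‖ ∧ ‖v - (a - b)‖ ≤ ‖v‖ / 2 := by
    intro v
    by_cases hv : v = 0
    · exact ⟨0, h0, 0, h0, by simp [hv], by simp [hv], by simp [hv]⟩
    · have hnv : (0:ℝ) < ‖v‖ := norm_pos_iff.mpr hv
      obtain ⟨a, ha, b, hb, hna, hnb, he⟩ := happ v (‖v‖/2) (by positivity)
      exact ⟨a, ha, b, hb, hna, hnb, he.le⟩
  choose A hA B hB hnA hnB hstep using hstep
  refine ⟨2*c + 1, by positivity, fun x => ?_⟩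
  -- recursive remainders
  set z : ℕ → X := fun k => Nat.rec x (fun _ w => w - (A w - B w)) k with hzdef
  have hz0 : z 0 = x := rfl
  have hzs : ∀ k, z (k+1) = z k - (A (z k) - B (z k)) := fun k => rfl
  have hznorm : ∀ k, ‖z k‖ ≤ (1/2)^k * ‖x‖ := by
    intro k
    induction k with
    | zero => simp [hz0]
    | succ k ih =>
      calc ‖z (k+1)‖ ≤ ‖z k‖ / 2 := by rw [hzs]; exact hstep (z k)
        _ ≤ ((1/2)^k * ‖x‖) / 2 := by linarith
        _ = (1/2)^(k+1) * ‖x‖ := by ring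
  have hbound : ∀ k, ‖A (z k)‖ ≤ c * ‖x‖ * (1/2)^k := by
    intro k
    calc ‖A (z k)‖ ≤ c * ‖z k‖ := hnA _
      _ ≤ c * ((1/2)^k * ‖x‖) := by
          have := hznorm k; nlinarith [norm_nonneg (z k)]
      _ = c * ‖x‖ * (1/2)^k := by ring
  have hbound' : ∀ k, ‖B (z k)‖ ≤ c * ‖x‖ * (1/2)^k := by
    intro k
    calc ‖B (z k)‖ ≤ c * ‖z k‖ := hnB _
      _ ≤ c * ((1/2)^k * ‖x‖) := by
          have := hznorm k; nlinarith [norm_nonneg (z k)]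
      _ = c * ‖x‖ * (1/2)^k := by ring
  have hgeo : Summable (fun k : ℕ => c * ‖x‖ * (1/2)^k) :=
    (summable_geometric_of_lt_one (by norm_num) (by norm_num)).mul_left _
  have hsumA : Summable (fun k => A (z k)) :=
    Summable.of_norm_bounded hgeo hbound
  have hsumB : Summable (fun k => B (z k)) :=
    Summable.of_norm_bounded hgeo hbound'
  have hgeosum : ∑' k : ℕ, c * ‖x‖ * (1/2)^k = 2 * (c * ‖x‖) := by
    rw [tsum_mul_left, tsum_geometric_two]; ring
  set a := ∑' k, A (z k) with ha
  set b := ∑' k, B (z k) with hb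
  have hamem : a ∈ Xpos := cone_tsum_mem Xpos hXpos_closed hXpos_add h0 _ hsumA (fun k => hA _)
  have hbmem : b ∈ Xpos := cone_tsum_mem Xpos hXpos_closed hXpos_add h0 _ hsumB (fun k => hB _)
  have hna : ‖a‖ ≤ (2*c+1) * ‖x‖ := by
    calc ‖a‖ ≤ ∑' k, ‖A (z k)‖ := norm_tsum_le_tsum_norm (hgeo.of_nonneg_of_le
          (fun k => norm_nonneg _) hbound)
      _ ≤ ∑' k : ℕ, c * ‖x‖ * (1/2)^k := Summable.tsum_le_tsum hbound
          (hgeo.of_nonneg_of_le (fun k => norm_nonneg _) hbound) hgeo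
      _ = 2 * (c * ‖x‖) := hgeosum
      _ ≤ (2*c+1) * ‖x‖ := by nlinarith [norm_nonneg x]
  have hnb : ‖b‖ ≤ (2*c+1) * ‖x‖ := by
    calc ‖b‖ ≤ ∑' k, ‖B (z k)‖ := norm_tsum_le_tsum_norm (hgeo.of_nonneg_of_le
          (fun k => norm_nonneg _) hbound')
      _ ≤ ∑' k : ℕ, c * ‖x‖ * (1/2)^k := Summable.tsum_le_tsum hbound'
          (hgeo.of_nonneg_of_le (fun k => norm_nonneg _) hbound') hgeo
      _ = 2 * (c * ‖x‖) := hgeosum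
      _ ≤ (2*c+1) * ‖x‖ := by nlinarith [norm_nonneg x]
  have hpart : ∀ N, ∑ k ∈ Finset.range N, (A (z k) - B (z k)) = x - z N := by
    intro N
    induction N with
    | zero => simp [hz0]
    | succ N ih =>
      rw [Finset.sum_range_succ, ih, hzs]
      abel
  have hzto : Tendsto z atTop (𝓝 0) := by
    have h2 : Tendsto (fun k : ℕ => (1/2:ℝ)^k * ‖x‖) atTop (𝓝 0) := by
      simpa using (tendsto_pow_atTop_nhds_zero_of_lt_one (by norm_num : (0:ℝ) ≤ 1/2)
        (by norm_num)).mul_const ‖x‖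
    exact squeeze_zero_norm hznorm h2
  have hxsum : HasSum (fun k => A (z k) - B (z k)) x := by
    rw [HasSum]
    have : Tendsto (fun N : ℕ => x - z N) atTop (𝓝 x) := by
      simpa using tendsto_const_nhds.sub hzto
    have h2 : Tendsto (fun N : ℕ => ∑ k ∈ Finset.range N, (A (z k) - B (z k)))
        atTop (𝓝 x) := by
      simpa only [hpart] using this
    -- convert from range-sums to general finsets via summability
    have hsum : Summable (fun k => A (z k) - B (z k)) := hsumA.sub hsumB
    have := hsum.hasSum.tendsto_sum_nat
    exact tendsto_nhds_unique this h2 ▸ hsum.hasSum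
  have hxab : x = a - b := (hxsum.unique (hsumA.hasSum.sub hsumB.hasSum))
  exact ⟨a, hamem, b, hbmem, hxab, hna, hnb⟩

end Decomp


section Helpers
variable {Y : Type*} [MeasurableSpace Y] {ν : Measure Y}
variable {X : Type*} [NormedAddCommGroup X] [CompleteSpace X]

theorem ennnorm_tsum_le (g : ℕ → X) :
    (‖∑' n, g n‖₊ : ℝ≥0∞) ≤ ∑' n, (‖g n‖₊ : ℝ≥0∞) := by
  by_cases hsum : Summable fun n => ‖g n‖₊
  · rw [← ENNReal.coe_tsum hsum]
    norm_cast
    by_cases hg : Summable g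
    · exact nnnorm_tsum_le hsum
    · simp [tsum_eq_zero_of_not_summable hg]
  · have : (∑' n, (‖g n‖₊ : ℝ≥0∞)) = ∞ := by
      by_contra hne
      exact hsum (ENNReal.tsum_coe_ne_top_iff_summable.mp hne)
    rw [this]; exact le_top

theorem ae_summable_of_tsum_lintegral_ne_top {g : ℕ → Y → X}
    (hmeas : ∀ n, AEStronglyMeasurable (g n) ν)
    (h : ∑' n, ∫⁻ x, ‖g n x‖₊ ∂ν ≠ ∞) :
    ∀ᵐ x ∂ν, Summable (fun n => g n x) ∧ Summable (fun n => ‖g n x‖) := by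
  have hmeas' : ∀ n, AEMeasurable (fun x => (‖g n x‖₊ : ℝ≥0∞)) ν := fun n => (hmeas n).enorm
  rw [← lintegral_tsum hmeas'] at h
  filter_upwards [ae_lt_top' (AEMeasurable.ennreal_tsum hmeas') h] with x hx
  have hsum : Summable fun n => ‖g n x‖₊ := by
    rw [← ENNReal.tsum_coe_ne_top_iff_summable]; exact hx.ne
  have h2 : Summable fun n => ‖g n x‖ := by
    have := NNReal.summable_coe.mpr hsum
    simpa [coe_nnnorm] using this
  exact ⟨h2.of_norm, h2⟩

theorem integrable_tsum_of_bound {g : ℕ → Y → X}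
    (hmeas : ∀ n, StronglyMeasurable (g n))
    {K : ℝ≥0∞} (hK : K ≠ ∞) (hb : ∑' n, ∫⁻ x, ‖g n x‖₊ ∂ν ≤ K) :
    Integrable (fun x => ∑' n, g n x) ν ∧ (∫⁻ x, ‖∑' n, g n x‖₊ ∂ν) ≤ K := by
  have hmeas' : ∀ n, AEMeasurable (fun x => (‖g n x‖₊ : ℝ≥0∞)) ν :=
    fun n => (hmeas n).aestronglyMeasurable.enorm
  have hae := ae_summable_of_tsum_lintegral_ne_top
    (fun n => (hmeas n).aestronglyMeasurable) (hb.trans_lt hK.lt_top).ne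
  have hsm : AEStronglyMeasurable (fun x => ∑' n, g n x) ν := by
    refine aestronglyMeasurable_of_tendsto_ae atTop
      (f := fun N x => ∑ n ∈ Finset.range N, g n x) (fun N =>
        (Finset.stronglyMeasurable_fun_sum _ fun n _ => hmeas n).aestronglyMeasurable) ?_
    filter_upwards [hae] with x hx
    exact hx.1.hasSum.tendsto_sum_nat
  have hlint : (∫⁻ x, ‖∑' n, g n x‖₊ ∂ν) ≤ K := by
    calc ∫⁻ x, ‖∑' n, g n x‖₊ ∂ν ≤ ∫⁻ x, ∑' n, (‖g n x‖₊ : ℝ≥0∞) ∂ν :=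
          lintegral_mono fun x => ennnorm_tsum_le _
      _ = ∑' n, ∫⁻ x, ‖g n x‖₊ ∂ν := lintegral_tsum hmeas'
      _ ≤ K := hb
  exact ⟨⟨hsm, hlint.trans_lt hK.lt_top⟩, hlint⟩

end Helpers


section Main
variable {Y : Type*} [MeasurableSpace Y] {ν : Measure Y}
variable {X : Type*} [NormedAddCommGroup X] [NormedSpace ℝ X] [CompleteSpace X]

theorem cone_L1_decomp (ν : Measure Y) (Xpos : Set X)
    (hXpos_closed : IsClosed Xpos)
    (hXpos_add : ∀ x ∈ Xpos, ∀ y ∈ Xpos, x + y ∈ Xpos)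
    (hXpos_smul : ∀ (t : ℝ), 0 ≤ t → ∀ x ∈ Xpos, t • x ∈ Xpos)
    (hXgen : ∀ x : X, ∃ a ∈ Xpos, ∃ b ∈ Xpos, x = a - b) :
    ∃ (C : ℝ), 0 < C ∧ ∀ f : Y → X, Integrable f ν →
      ∃ fp fm : Y → X, Integrable fp ν ∧ Integrable fm ν ∧
        (∀ s, fp s ∈ Xpos) ∧ (∀ s, fm s ∈ Xpos) ∧ (∀ s, f s = fp s - fm s) ∧
        (∫ s, ‖fp s‖ ∂ν) ≤ C * ∫ s, ‖f s‖ ∂ν ∧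
        (∫ s, ‖fm s‖ ∂ν) ≤ C * ∫ s, ‖f s‖ ∂ν := by
  classical
  have h0 : (0:X) ∈ Xpos := cone_zero_mem Xpos hXpos_smul hXgen
  obtain ⟨C, hC, hdec⟩ := cone_decomp Xpos hXpos_closed hXpos_add hXpos_smul hXgen
    (cone_approx_decomp Xpos hXpos_closed hXpos_add hXpos_smul hXgen) h0
  choose P hPmem M hMmem hPM hPn hMn using hdec
  have hP0 : P 0 = 0 := by
    have := hPn 0; rw [norm_zero, mul_zero] at this
    exact norm_le_zero_iff.mp this
  have hM0 : M 0 = 0 := by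
    have := hMn 0; rw [norm_zero, mul_zero] at this
    exact norm_le_zero_iff.mp this
  refine ⟨4*C + 1, by positivity, fun f hf => ?_⟩
  set I := ∫ s, ‖f s‖ ∂ν with hIdef
  have hI0 : 0 ≤ I := integral_nonneg fun s => norm_nonneg _
  by_cases hIz : I = 0
  · -- degenerate case : f = 0 a.e.
    have hf0 : ∀ᵐ x ∂ν, f x = 0 := by
      have := (integral_eq_zero_iff_of_nonneg (fun s => norm_nonneg (f s)) hf.norm).mp hIz
      filter_upwards [this] with x hx
      simpa [norm_eq_zero] using hx
    refine ⟨fun x => P (f x), fun x => M (f x), ?_, ?_, fun x => hPmem _, fun x => hMmem _,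
      fun x => hPM (f x), ?_, ?_⟩
    · refine (integrable_zero _ _ _).congr ?_
      filter_upwards [hf0] with x hx; simp [hx, hP0]
    · refine (integrable_zero _ _ _).congr ?_
      filter_upwards [hf0] with x hx; simp [hx, hM0]
    · have : (∫ x, ‖P (f x)‖ ∂ν) = 0 := by
        rw [← integral_zero Y ℝ (μ := ν)]
        refine integral_congr_ae ?_
        filter_upwards [hf0] with x hx; simp [hx, hP0]
      rw [this, hIz]; simp
    · have : (∫ x, ‖M (f x)‖ ∂ν) = 0 := by
        rw [← integral_zero Y ℝ (μ := ν)]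
        refine integral_congr_ae ?_
        filter_upwards [hf0] with x hx; simp [hx, hM0]
      rw [this, hIz]; simp
  -- main case
  have hIpos : 0 < I := lt_of_le_of_ne hI0 (Ne.symm hIz)
  set J := ENNReal.ofReal I with hJdef
  have hJ0 : J ≠ 0 := by simp [hJdef, hIpos, ENNReal.ofReal_eq_zero, not_le]
  have hJtop : J ≠ ∞ := ENNReal.ofReal_ne_top
  have hJ : ∫⁻ x, ‖f x‖₊ ∂ν = J := (ofReal_integral_norm_eq_lintegral_enorm hf).symm
  have hmem : MemLp f 1 ν := memLp_one_iff_integrable.mpr hf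
  have hsimple : ∀ n : ℕ, ∃ g : SimpleFunc Y X,
      eLpNorm (f - ⇑g) 1 ν < J * 2⁻¹^(n+1) ∧ MemLp ⇑g 1 ν := by
    intro n
    refine hmem.exists_simpleFunc_eLpNorm_sub_lt ENNReal.one_ne_top ?_
    exact mul_ne_zero hJ0 (pow_ne_zero _ (ENNReal.inv_ne_zero.mpr ENNReal.ofNat_ne_top))
  choose s hsn hsmem using hsimple
  -- telescoped terms
  set t : ℕ → SimpleFunc Y X := fun n => Nat.rec (s 0) (fun k _ => s (k+1) - s k) n with htdef
  have ht0 : t 0 = s 0 := rfl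
  have hts : ∀ n, t (n+1) = s (n+1) - s n := fun n => rfl
  have htel : ∀ (N : ℕ) (x : Y), ∑ k ∈ Finset.range (N+1), t k x = s N x := by
    intro N x
    induction N with
    | zero => simp [ht0]
    | succ N ih =>
      rw [Finset.sum_range_succ, ih, hts]
      simp
  have hLn : ∀ n, ∫⁻ x, ‖t n x‖₊ ∂ν ≤ 2 * J * 2⁻¹^n := by
    intro n
    simp only [← enorm_eq_nnnorm]; rw [← eLpNorm_one_eq_lintegral_enorm]
    have hhalf : (2⁻¹ : ℝ≥0∞) ≤ 1 := ENNReal.inv_le_one.mpr one_le_two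
    match n with
    | 0 =>
      have h1 : ⇑(t 0) = (⇑(s 0) - f) + f := by ext x; simp [ht0]
      calc eLpNorm (⇑(t 0)) 1 ν ≤ eLpNorm (⇑(s 0) - f) 1 ν + eLpNorm f 1 ν := by
            rw [h1]
            exact eLpNorm_add_le ((s 0).aestronglyMeasurable.sub hf.aestronglyMeasurable)
              hf.aestronglyMeasurable le_rfl
        _ ≤ J * 2⁻¹^(0+1) + J := by
            refine add_le_add ?_ ?_
            · rw [show ⇑(s 0) - f = -(f - ⇑(s 0)) from (neg_sub _ _).symm, eLpNorm_neg]
              exact (hsn 0).le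
            · rw [eLpNorm_one_eq_lintegral_enorm]; exact hJ.le
        _ ≤ J + J := by
            refine add_le_add ?_ le_rfl
            calc J * 2⁻¹^(0+1) ≤ J * 1 := mul_le_mul_right (pow_le_one' hhalf _) _
              _ = J := mul_one _
        _ = 2 * J * 2⁻¹^0 := by rw [pow_zero, mul_one, two_mul]
    | (n+1) =>
      have h1 : ⇑(t (n+1)) = (⇑(s (n+1)) - f) + (f - ⇑(s n)) := by
        rw [hts]; ext x; simp [SimpleFunc.coe_sub]
      calc eLpNorm (⇑(t (n+1))) 1 ν
          ≤ eLpNorm (⇑(s (n+1)) - f) 1 ν + eLpNorm (f - ⇑(s n)) 1 ν := by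
            rw [h1]
            exact eLpNorm_add_le ((s (n+1)).aestronglyMeasurable.sub hf.aestronglyMeasurable)
              (hf.aestronglyMeasurable.sub (s n).aestronglyMeasurable) le_rfl
        _ ≤ J * 2⁻¹^(n+2) + J * 2⁻¹^(n+1) := by
            refine add_le_add ?_ (hsn n).le
            rw [show ⇑(s (n+1)) - f = -(f - ⇑(s (n+1))) from (neg_sub _ _).symm, eLpNorm_neg]
            exact (hsn (n+1)).le
        _ ≤ J * 2⁻¹^(n+1) + J * 2⁻¹^(n+1) := by
            refine add_le_add (mul_le_mul_right ?_ _) le_rfl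
            exact pow_le_pow_of_le_one (zero_le) hhalf (by omega)
        _ = 2 * J * 2⁻¹^(n+1) := by ring
  have hLsum : ∑' n, ∫⁻ x, ‖t n x‖₊ ∂ν ≤ 4 * J := by
    calc ∑' n, ∫⁻ x, ‖t n x‖₊ ∂ν ≤ ∑' n : ℕ, 2*J*2⁻¹^n := ENNReal.tsum_le_tsum hLn
      _ = 2*J * (1 - 2⁻¹)⁻¹ := by rw [ENNReal.tsum_mul_left, ENNReal.tsum_geometric]
      _ = 4 * J := by rw [ENNReal.one_sub_inv_two, inv_inv]; ring
  have h4Jtop : (4 * J) ≠ ∞ := ENNReal.mul_ne_top (by norm_num) hJtop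
  -- positive/negative parts of the pieces
  have htpsm : ∀ n, StronglyMeasurable fun x => P (t n x) := by
    intro n
    have h : (fun x => P (t n x)) = ⇑((t n).map P) := by
      ext x; rw [SimpleFunc.map_apply]
    rw [h]; exact ((t n).map P).stronglyMeasurable
  have htmsm : ∀ n, StronglyMeasurable fun x => M (t n x) := by
    intro n
    have h : (fun x => M (t n x)) = ⇑((t n).map M) := by
      ext x; rw [SimpleFunc.map_apply]
    rw [h]; exact ((t n).map M).stronglyMeasurable
  have hPle : ∀ x : X, (‖P x‖₊ : ℝ≥0∞) ≤ ENNReal.ofReal C * ‖x‖₊ := by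
    intro x
    rw [← enorm_eq_nnnorm, ← enorm_eq_nnnorm, ← ofReal_norm, ← ofReal_norm, ← ENNReal.ofReal_mul hC.le]
    exact ENNReal.ofReal_le_ofReal (hPn x)
  have hMle : ∀ x : X, (‖M x‖₊ : ℝ≥0∞) ≤ ENNReal.ofReal C * ‖x‖₊ := by
    intro x
    rw [← enorm_eq_nnnorm, ← enorm_eq_nnnorm, ← ofReal_norm, ← ofReal_norm, ← ENNReal.ofReal_mul hC.le]
    exact ENNReal.ofReal_le_ofReal (hMn x)
  have htpK : ∑' n, ∫⁻ x, ‖P (t n x)‖₊ ∂ν ≤ ENNReal.ofReal C * (4*J) := by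
    calc ∑' n, ∫⁻ x, ‖P (t n x)‖₊ ∂ν
        ≤ ∑' n, ENNReal.ofReal C * ∫⁻ x, ‖t n x‖₊ ∂ν := by
          refine ENNReal.tsum_le_tsum fun n => ?_
          calc ∫⁻ x, ‖P (t n x)‖₊ ∂ν ≤ ∫⁻ x, ENNReal.ofReal C * ‖t n x‖₊ ∂ν :=
                lintegral_mono fun x => hPle _
            _ = _ := lintegral_const_mul' _ _ ENNReal.ofReal_ne_top
      _ = ENNReal.ofReal C * ∑' n, ∫⁻ x, ‖t n x‖₊ ∂ν := ENNReal.tsum_mul_left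
      _ ≤ _ := mul_le_mul_right hLsum _
  have htmK : ∑' n, ∫⁻ x, ‖M (t n x)‖₊ ∂ν ≤ ENNReal.ofReal C * (4*J) := by
    calc ∑' n, ∫⁻ x, ‖M (t n x)‖₊ ∂ν
        ≤ ∑' n, ENNReal.ofReal C * ∫⁻ x, ‖t n x‖₊ ∂ν := by
          refine ENNReal.tsum_le_tsum fun n => ?_
          calc ∫⁻ x, ‖M (t n x)‖₊ ∂ν ≤ ∫⁻ x, ENNReal.ofReal C * ‖t n x‖₊ ∂ν :=
                lintegral_mono fun x => hMle _
            _ = _ := lintegral_const_mul' _ _ ENNReal.ofReal_ne_top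
      _ = ENNReal.ofReal C * ∑' n, ∫⁻ x, ‖t n x‖₊ ∂ν := ENNReal.tsum_mul_left
      _ ≤ _ := mul_le_mul_right hLsum _
  have hKtop : ENNReal.ofReal C * (4*J) ≠ ∞ := ENNReal.mul_ne_top ENNReal.ofReal_ne_top h4Jtop
  obtain ⟨hfpint, hfpL⟩ := integrable_tsum_of_bound (ν := ν) (g := fun n x => P (t n x))
    htpsm hKtop htpK
  obtain ⟨hfmint, hfmL⟩ := integrable_tsum_of_bound (ν := ν) (g := fun n x => M (t n x))
    htmsm hKtop htmK
  obtain ⟨hhint, hhL⟩ := integrable_tsum_of_bound (ν := ν) (g := fun n x => t n x)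
    (fun n => (t n).stronglyMeasurable) h4Jtop hLsum
  have haetp := ae_summable_of_tsum_lintegral_ne_top (ν := ν) (g := fun n x => P (t n x))
    (fun n => (htpsm n).aestronglyMeasurable) (htpK.trans_lt hKtop.lt_top).ne
  have haetm := ae_summable_of_tsum_lintegral_ne_top (ν := ν) (g := fun n x => M (t n x))
    (fun n => (htmsm n).aestronglyMeasurable) (htmK.trans_lt hKtop.lt_top).ne
  have haet := ae_summable_of_tsum_lintegral_ne_top (ν := ν) (g := fun n x => t n x)
    (fun n => (t n).aestronglyMeasurable) (hLsum.trans_lt h4Jtop.lt_top).ne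
  -- f is a.e. equal to the pointwise sum of the pieces
  have hfh : f =ᵐ[ν] fun x => ∑' n, t n x := by
    have hEbound : ∀ N : ℕ, ∫⁻ x, ‖f x - ∑' n, t n x‖₊ ∂ν ≤ 5 * J * 2⁻¹^N := by
      intro N
      have hhalf : (2⁻¹ : ℝ≥0∞) ≤ 1 := ENNReal.inv_le_one.mpr one_le_two
      have hptw : ∀ᵐ x ∂ν, (‖f x - ∑' n, t n x‖₊ : ℝ≥0∞) ≤
          (‖f x - s N x‖₊ : ℝ≥0∞) + ∑' n, (‖t (n+(N+1)) x‖₊ : ℝ≥0∞) := by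
        filter_upwards [haet] with x hx
        have hdecomp : (∑' n, t n x) = s N x + ∑' n, t (n+(N+1)) x := by
          rw [← htel N x]
          exact (Summable.sum_add_tsum_nat_add (N+1) hx.1).symm
        have h2 : f x - ∑' n, t n x = (f x - s N x) + -(∑' n, t (n+(N+1)) x) := by
          rw [hdecomp]; abel
        rw [h2]
        calc (‖(f x - s N x) + -(∑' n, t (n+(N+1)) x)‖₊ : ℝ≥0∞)
            ≤ (‖f x - s N x‖₊ : ℝ≥0∞) + (‖-(∑' n, t (n+(N+1)) x)‖₊ : ℝ≥0∞) := by
              norm_cast; exact nnnorm_add_le _ _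
          _ ≤ _ := by
              rw [nnnorm_neg]
              exact add_le_add le_rfl (ennnorm_tsum_le _)
      have htail : ∑' n : ℕ, 2*J*2⁻¹^(n+(N+1)) = 4*J*2⁻¹^(N+1) := by
        have hterm : ∀ n : ℕ, 2*J*2⁻¹^(n+(N+1)) = (2*J*2⁻¹^(N+1)) * 2⁻¹^n := by
          intro n; rw [pow_add]; ring
        calc ∑' n : ℕ, 2*J*2⁻¹^(n+(N+1)) = ∑' n : ℕ, (2*J*2⁻¹^(N+1)) * 2⁻¹^n :=
              tsum_congr hterm
          _ = (2*J*2⁻¹^(N+1)) * (1-2⁻¹)⁻¹ := by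
              rw [ENNReal.tsum_mul_left, ENNReal.tsum_geometric]
          _ = 4*J*2⁻¹^(N+1) := by rw [ENNReal.one_sub_inv_two, inv_inv]; ring
      calc ∫⁻ x, ‖f x - ∑' n, t n x‖₊ ∂ν
          ≤ ∫⁻ x, ((‖f x - s N x‖₊ : ℝ≥0∞) + ∑' n, (‖t (n+(N+1)) x‖₊ : ℝ≥0∞)) ∂ν :=
            lintegral_mono_ae hptw
        _ = (∫⁻ x, (‖f x - s N x‖₊ : ℝ≥0∞) ∂ν) +
              ∫⁻ x, ∑' n, (‖t (n+(N+1)) x‖₊ : ℝ≥0∞) ∂ν :=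
            lintegral_add_left'
              ((hf.aestronglyMeasurable.sub (s N).aestronglyMeasurable).enorm) _
        _ ≤ J * 2⁻¹^(N+1) + ∑' n, ∫⁻ x, (‖t (n+(N+1)) x‖₊ : ℝ≥0∞) ∂ν := by
            refine add_le_add ?_ ?_
            · simp only [← enorm_eq_nnnorm]; rw [← eLpNorm_one_eq_lintegral_enorm]; exact (hsn N).le
            · simp only [← enorm_eq_nnnorm]; rw [lintegral_tsum fun n => ((t (n+(N+1))).aestronglyMeasurable.enorm)]
        _ ≤ J * 2⁻¹^(N+1) + ∑' n : ℕ, 2*J*2⁻¹^(n+(N+1)) :=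
            add_le_add le_rfl (ENNReal.tsum_le_tsum fun n => hLn _)
        _ = 5 * J * 2⁻¹^(N+1) := by rw [htail]; ring
        _ ≤ 5 * J * 2⁻¹^N := by
            refine mul_le_mul_right ?_ _
            exact pow_le_pow_of_le_one (zero_le) hhalf (by omega)
    have hE0 : ∫⁻ x, ‖f x - ∑' n, t n x‖₊ ∂ν = 0 := by
      refine le_antisymm ?_ zero_le
      have h1 : Tendsto (fun N : ℕ => (2⁻¹ : ℝ≥0∞)^N) atTop (𝓝 0) :=
        ENNReal.tendsto_pow_atTop_nhds_zero_of_lt_one ((by norm_num : (2⁻¹ : ℝ≥0∞) < 1))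
      have htend : Tendsto (fun N : ℕ => 5*J*2⁻¹^N) atTop (𝓝 0) := by
        have := ENNReal.Tendsto.const_mul (a := 5*J) h1
          (Or.inr (ENNReal.mul_ne_top (by norm_num) hJtop))
        simpa using this
      exact ge_of_tendsto htend (Eventually.of_forall hEbound)
    have hsubm : AEMeasurable (fun x => (‖f x - ∑' n, t n x‖₊ : ℝ≥0∞)) ν :=
      (hf.aestronglyMeasurable.sub hhint.aestronglyMeasurable).enorm
    have := (lintegral_eq_zero_iff' hsubm).mp hE0
    filter_upwards [this] with x hx
    have h3 : f x - ∑' n, t n x = 0 := by simpa using hx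
    exact sub_eq_zero.mp h3
  -- the good set condition
  set cond : Y → Prop := fun x => (Summable fun n => P (t n x)) ∧ (Summable fun n => M (t n x)) ∧
    (∑' n, P (t n x)) - (∑' n, M (t n x)) = f x with hconddef
  have hcondae : ∀ᵐ x ∂ν, cond x := by
    filter_upwards [haetp, haetm, haet, hfh] with x h1 h2 h3 h4
    refine ⟨h1.1, h2.1, ?_⟩
    have hsub : (∑' n, P (t n x)) - (∑' n, M (t n x)) = ∑' n, (P (t n x) - M (t n x)) :=
      ((h1.1.hasSum.sub h2.1.hasSum).tsum_eq).symm
    rw [hsub]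
    have heq : ∀ n : ℕ, P (t n x) - M (t n x) = t n x := fun n => (hPM _).symm
    rw [tsum_congr heq]
    exact h4.symm
  classical
  have hfpae : (fun x => if cond x then (∑' n, P (t n x)) else P (f x)) =ᵐ[ν]
      fun x => ∑' n, P (t n x) := by
    filter_upwards [hcondae] with x hx
    rw [if_pos hx]
  have hfmae : (fun x => if cond x then (∑' n, M (t n x)) else M (f x)) =ᵐ[ν]
      fun x => ∑' n, M (t n x) := by
    filter_upwards [hcondae] with x hx
    rw [if_pos hx]
  refine ⟨fun x => if cond x then (∑' n, P (t n x)) else P (f x),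
          fun x => if cond x then (∑' n, M (t n x)) else M (f x),
          hfpint.congr hfpae.symm, hfmint.congr hfmae.symm, ?_, ?_, ?_, ?_, ?_⟩
  · intro x
    by_cases hx : cond x
    · simp only [if_pos hx]
      exact cone_tsum_mem Xpos hXpos_closed hXpos_add h0 _ hx.1 fun n => hPmem _
    · simp only [if_neg hx]; exact hPmem _
  · intro x
    by_cases hx : cond x
    · simp only [if_pos hx]
      exact cone_tsum_mem Xpos hXpos_closed hXpos_add h0 _ hx.2.1 fun n => hMmem _
    · simp only [if_neg hx]; exact hMmem _
  · intro x
    by_cases hx : cond x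
    · simp only [if_pos hx]; exact hx.2.2.symm
    · simp only [if_neg hx]; exact hPM _
  · calc (∫ x, ‖if cond x then (∑' n, P (t n x)) else P (f x)‖ ∂ν)
        = ∫ x, ‖∑' n, P (t n x)‖ ∂ν := integral_congr_ae (hfpae.fun_comp norm)
      _ = (∫⁻ x, ‖∑' n, P (t n x)‖₊ ∂ν).toReal :=
          integral_norm_eq_lintegral_enorm hfpint.aestronglyMeasurable
      _ ≤ (ENNReal.ofReal C * (4*J)).toReal := ENNReal.toReal_mono hKtop hfpL
      _ = C * (4 * I) := by
          rw [ENNReal.toReal_mul, ENNReal.toReal_mul, ENNReal.toReal_ofReal hC.le, hJdef,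
            ENNReal.toReal_ofReal hI0]
          norm_num
      _ ≤ (4*C+1) * I := by nlinarith
  · calc (∫ x, ‖if cond x then (∑' n, M (t n x)) else M (f x)‖ ∂ν)
        = ∫ x, ‖∑' n, M (t n x)‖ ∂ν := integral_congr_ae (hfmae.fun_comp norm)
      _ = (∫⁻ x, ‖∑' n, M (t n x)‖₊ ∂ν).toReal :=
          integral_norm_eq_lintegral_enorm hfmint.aestronglyMeasurable
      _ ≤ (ENNReal.ofReal C * (4*J)).toReal := ENNReal.toReal_mono hKtop hfmL
      _ = C * (4 * I) := by
          rw [ENNReal.toReal_mul, ENNReal.toReal_mul, ENNReal.toReal_ofReal hC.le, hJdef,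
            ENNReal.toReal_ofReal hI0]
          norm_num
      _ ≤ (4*C+1) * I := by nlinarith

end Main

/-- Let `G` be a locally compact Hausdorff group with left Haar
measure `μ`, `ω` a weight on `G`, and `ν = ω dμ`. Let `X` be a pre-ordered Banach
space whose closed cone `Xpos` is generating. Then the cone of a.e. `Xpos`-valued
integrable functions is generating in the Bochner space `L¹(ν, X)`: there exists
`α > 0` such that every Bochner `ν`-integrable `f : G → X` can be written
pointwise as `f = f⁺ - f⁻` with `f⁺, f⁻` `ν`-integrable and `Xpos`-valued, and
`∫‖f⁺‖ dν ≤ α ∫‖f‖ dν`, `∫‖f⁻‖ dν ≤ α ∫‖f‖ dν`. -/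
theorem stmt13
    {G : Type*} [Group G] [TopologicalSpace G] [IsTopologicalGroup G]
    [LocallyCompactSpace G] [T2Space G]
    [MeasurableSpace G] [BorelSpace G]
    (μ : Measure G) [μ.IsHaarMeasure]
    (ω : G → ℝ) (hω_meas : Measurable ω) (hω_nonneg : ∀ s : G, 0 ≤ ω s)
    (hω_ne : ω ≠ 0)
    (hω_submul : ∀ s t : G, ω (s * t) ≤ ω s * ω t)
    {X : Type*} [NormedAddCommGroup X] [NormedSpace ℝ X] [CompleteSpace X]
    (Xpos : Set X) (hXpos_closed : IsClosed Xpos)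
    (hXpos_add : ∀ x ∈ Xpos, ∀ y ∈ Xpos, x + y ∈ Xpos)
    (hXpos_smul : ∀ (t : ℝ), 0 ≤ t → ∀ x ∈ Xpos, t • x ∈ Xpos)
    (hXgen : ∀ x : X, ∃ a ∈ Xpos, ∃ b ∈ Xpos, x = a - b) :
    ∃ (α : ℝ), 0 < α ∧
      ∀ f : G → X,
        Integrable f (μ.withDensity fun s => ENNReal.ofReal (ω s)) →
        ∃ fp fm : G → X,
          Integrable fp (μ.withDensity fun s => ENNReal.ofReal (ω s)) ∧
          Integrable fm (μ.withDensity fun s => ENNReal.ofReal (ω s)) ∧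
          (∀ s : G, fp s ∈ Xpos) ∧ (∀ s : G, fm s ∈ Xpos) ∧
          (∀ s : G, f s = fp s - fm s) ∧
          (∫ s, ‖fp s‖ ∂(μ.withDensity fun s => ENNReal.ofReal (ω s))) ≤
            α * (∫ s, ‖f s‖ ∂(μ.withDensity fun s => ENNReal.ofReal (ω s))) ∧
          (∫ s, ‖fm s‖ ∂(μ.withDensity fun s => ENNReal.ofReal (ω s))) ≤
            α * (∫ s, ‖f s‖ ∂(μ.withDensity fun s => ENNReal.ofReal (ω s))) := by
  obtain ⟨C, hC, h⟩ := cone_L1_decomp (μ.withDensity fun s => ENNReal.ofReal (ω s))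
    Xpos hXpos_closed hXpos_add hXpos_smul hXgen
  exact ⟨C, hC, h⟩
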